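/- arXiv:2311.06511 — 3 statements merged into one kernel-verified Lean document; each statement's English description precedes it below -/
import Mathlib

section
/- Let $K\subset\mathbb{C}$ be a compact set, $n\geq 1$, and let $Z\subseteq K$ be a finite set and $c\geq 1$ a constant such that $\sup_{z\in K}|p(z)|\leq c\,\max_{z\in Z}|p(z)|$ for every complex polynomial $p$ of degree at most $n$. Let $\xi_1,\dots,\xi_M\in K$ be distinct points and $\phi_1,\dots,\phi_M$ complex polynomials of degree at most $n$, and define $L:C(K)\to C(K)$ by $Lf(z)=\sum_{j=1}^{M}f(\xi_j)\phi_j(z)$ and $\lambda(z)=\sum_{j=1}^{M}|\phi_j(z)|$. Then $\max_{z\in Z}\lambda(z) \leq \|L\| \leq c\,\max_{z\in Z}\lambda(z)$, where $\|L\|$ is the operator norm of $L$ with respect to the sup-norm on $C(K)$. -/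
noncomputable def csign (v : ℂ) : ℂ :=
  if v = 0 then 1 else (starRingEnd ℂ) v / (‖v‖ : ℂ)

lemma csign_abs (v : ℂ) : ‖csign v‖ = 1 := by
  unfold csign
  split_ifs with h
  · simp
  · rw [norm_div, Complex.norm_conj, Complex.norm_real, Real.norm_eq_abs, abs_of_nonneg (norm_nonneg v), div_self]
    exact (norm_ne_zero_iff.mpr h)

lemma csign_mul (v : ℂ) : csign v * v = (‖v‖ : ℂ) := by
  unfold csign
  split_ifs with h
  · simp [h]
  · have habs : (‖v‖ : ℂ) ≠ 0 := by
      simpa using norm_ne_zero_iff.mpr h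
    field_simp
    rw [mul_comm, Complex.mul_conj, ← Complex.sq_norm]
    push_cast
    ring

/-- Two-sided estimate of the Lebesgue constant of a sampling-based
polynomial projection-type operator by the max of its Lebesgue function on an
admissible mesh `Z` of `K` with norming constant `c`. -/
theorem lebesgue_constant_mesh_estimate (K : Set ℂ) [CompactSpace K]
    (n : ℕ) (hn : 1 ≤ n) (Z : Finset ℂ) (hZne : Z.Nonempty) (hZK : ↑Z ⊆ K)
    (c : ℝ) (hc : 1 ≤ c)
    (hnorm : ∀ p : Polynomial ℂ, p.degree ≤ (n : ℕ) →
      ∀ z ∈ K, ‖p.eval z‖ ≤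
        c * Z.sup' hZne (fun w => ‖p.eval w‖))
    (M : ℕ) (ξ : Fin M → K) (hξ : Function.Injective ξ)
    (φ : Fin M → Polynomial ℂ) (hφ : ∀ j, (φ j).degree ≤ (n : ℕ))
    (L : C(K, ℂ) →L[ℂ] C(K, ℂ))
    (hL : ∀ f : C(K, ℂ), ∀ z : K,
      L f z = ∑ j : Fin M, f (ξ j) * (φ j).eval (z : ℂ)) :
    Z.sup' hZne (fun z => ∑ j : Fin M, ‖(φ j).eval z‖) ≤ ‖L‖ ∧
    ‖L‖ ≤ c * Z.sup' hZne (fun z => ∑ j : Fin M, ‖(φ j).eval z‖) := by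
  set S := Z.sup' hZne (fun z => ∑ j : Fin M, ‖(φ j).eval z‖) with hSdef
  have hSmem : ∀ w ∈ Z, ∑ j : Fin M, ‖(φ j).eval w‖ ≤ S :=
    fun w hw => by rw [hSdef]; exact Finset.le_sup' (fun z => ∑ j : Fin M, ‖(φ j).eval z‖) hw
  have hS0 : 0 ≤ S := by
    obtain ⟨w, hw⟩ := hZne
    exact le_trans (Finset.sum_nonneg fun j _ => norm_nonneg _) (hSmem w hw)
  -- pointwise bound of the Lebesgue function on all of K
  have hlam : ∀ z ∈ K, ∑ j : Fin M, ‖(φ j).eval z‖ ≤ c * S := by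
    intro z hz
    set p : Polynomial ℂ :=
      ∑ j : Fin M, csign ((φ j).eval z) • φ j with hp
    have hdeg : p.degree ≤ (n : ℕ) := by
      rw [hp]
      refine (Polynomial.degree_sum_le _ _).trans ?_
      refine Finset.sup_le fun j _ => ?_
      exact (Polynomial.degree_smul_le _ _).trans (hφ j)
    have heval : ∀ w : ℂ, p.eval w = ∑ j : Fin M, csign ((φ j).eval z) * (φ j).eval w := by
      intro w
      simp [hp, Polynomial.eval_finset_sum, smul_eq_mul]
    have hevalz : ‖p.eval z‖ = ∑ j : Fin M, ‖(φ j).eval z‖ := by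
      rw [heval z]
      have : ∑ j : Fin M, csign ((φ j).eval z) * (φ j).eval z
          = ((∑ j : Fin M, ‖(φ j).eval z‖ : ℝ) : ℂ) := by
        push_cast
        exact Finset.sum_congr rfl fun j _ => csign_mul _
      rw [this, Complex.norm_real, Real.norm_eq_abs,
        abs_of_nonneg (Finset.sum_nonneg fun j _ => norm_nonneg _)]
    have hsup : Z.sup' hZne (fun w => ‖p.eval w‖) ≤ S := by
      refine Finset.sup'_le _ _ fun w hw => ?_
      calc ‖p.eval w‖
          ≤ ∑ j : Fin M, ‖csign ((φ j).eval z) * (φ j).eval w‖ := by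
            rw [heval w]; exact norm_sum_le _ _
        _ = ∑ j : Fin M, ‖(φ j).eval w‖ := by
            refine Finset.sum_congr rfl fun j _ => ?_
            rw [norm_mul, csign_abs, one_mul]
        _ ≤ S := hSmem w hw
    calc ∑ j : Fin M, ‖(φ j).eval z‖ = ‖p.eval z‖ := hevalz.symm
      _ ≤ c * Z.sup' hZne (fun w => ‖p.eval w‖) := hnorm p hdeg z hz
      _ ≤ c * S := by
          exact mul_le_mul_of_nonneg_left hsup (le_trans zero_le_one hc)
  constructor
  · -- lower bound
    refine Finset.sup'_le _ _ fun z hz => ?_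
    -- separation radius
    obtain ⟨r, hr0, hr⟩ : ∃ r : ℝ, 0 < r ∧
        ∀ i j : Fin M, i ≠ j → 2 * r ≤ dist (ξ i : ℂ) (ξ j : ℂ) := by
      by_cases hM : ((Finset.univ : Finset (Fin M)).offDiag).Nonempty
      · refine ⟨(((Finset.univ : Finset (Fin M)).offDiag).inf' hM (fun q => dist (ξ q.1 : ℂ) (ξ q.2 : ℂ))) / 2, ?_, ?_⟩
        · have : 0 < ((Finset.univ : Finset (Fin M)).offDiag).inf' hM (fun q => dist (ξ q.1 : ℂ) (ξ q.2 : ℂ)) := by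
            rw [Finset.lt_inf'_iff]
            intro q hq
            rw [Finset.mem_offDiag] at hq
            refine dist_pos.2 fun hd => hq.2.2 (hξ (Subtype.ext hd))
          linarith
        · intro i j hij
          have hmem : (i, j) ∈ (Finset.univ : Finset (Fin M)).offDiag := by
            simp [Finset.mem_offDiag, hij]
          have := Finset.inf'_le (fun q => dist (ξ q.1 : ℂ) (ξ q.2 : ℂ)) hmem
          linarith
      · exact ⟨1, one_pos, fun i j hij => absurd ⟨(i, j), by simp [Finset.mem_offDiag, hij]⟩ hM⟩
    set ε : Fin M → ℂ := fun j => csign ((φ j).eval z) with hε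
    set g : Fin M → K → ℝ := fun j w => max 0 (1 - dist (w : ℂ) (ξ j : ℂ) / r) with hg
    have hgcont : ∀ j, Continuous (g j) := by
      intro j
      exact continuous_const.max
        (continuous_const.sub ((continuous_subtype_val.dist continuous_const).div_const r))
    set f : C(K, ℂ) := ⟨fun w => ∑ j : Fin M, ε j * ((g j w : ℝ) : ℂ), by
      exact continuous_finset_sum _ fun j _ =>
        continuous_const.mul (Complex.continuous_ofReal.comp (hgcont j))⟩ with hf
    have hg01 : ∀ j (w : K), 0 ≤ g j w ∧ g j w ≤ 1 := by
      intro j w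
      refine ⟨le_max_left _ _, max_le zero_le_one ?_⟩
      have : 0 ≤ dist (w : ℂ) (ξ j : ℂ) / r := div_nonneg dist_nonneg hr0.le
      linarith
    have hgzero : ∀ j (w : K), r ≤ dist (w : ℂ) (ξ j : ℂ) → g j w = 0 := by
      intro j w hd
      have h1 : 1 - dist (w : ℂ) (ξ j : ℂ) / r ≤ 0 := by
        have : 1 ≤ dist (w : ℂ) (ξ j : ℂ) / r := (one_le_div hr0).2 hd
        linarith
      show max 0 (1 - dist (w : ℂ) (ξ j : ℂ) / r) = 0
      exact max_eq_left h1
    have hsumg : ∀ w : K, ∑ j : Fin M, g j w ≤ 1 := by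
      intro w
      by_cases hE : ∃ j0 : Fin M, dist (w : ℂ) (ξ j0 : ℂ) < r
      · obtain ⟨j0, hj0⟩ := hE
        rw [Finset.sum_eq_single j0]
        · exact (hg01 j0 w).2
        · intro j _ hj
          refine hgzero j w (le_of_not_gt fun hd => ?_)
          have h1 : dist (ξ j : ℂ) (ξ j0 : ℂ) ≤ dist (w : ℂ) (ξ j : ℂ) + dist (w : ℂ) (ξ j0 : ℂ) :=
            dist_triangle_left _ _ _
          have h2 := hr j j0 hj
          linarith
        · intro h; exact absurd (Finset.mem_univ j0) h
      · push_neg at hE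
        rw [Finset.sum_eq_zero fun j _ => hgzero j w (hE j)]
        exact zero_le_one
    have hfval : ∀ i : Fin M, f (ξ i) = ε i := by
      intro i
      show ∑ j : Fin M, ε j * ((g j (ξ i) : ℝ) : ℂ) = ε i
      rw [Finset.sum_eq_single i]
      · have : g i (ξ i) = 1 := by
          simp [hg, dist_self, max_eq_right zero_le_one]
        rw [this]; simp
      · intro j _ hj
        have : g j (ξ i) = 0 := by
          refine hgzero j (ξ i) ?_
          have := hr i j hj.symm
          linarith [hr0]
        rw [this]; simp
      · intro h; exact absurd (Finset.mem_univ i) h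
    have hfnorm : ‖f‖ ≤ 1 := by
      rw [ContinuousMap.norm_le _ zero_le_one]
      intro w
      show ‖∑ j : Fin M, ε j * ((g j w : ℝ) : ℂ)‖ ≤ 1
      calc ‖∑ j : Fin M, ε j * ((g j w : ℝ) : ℂ)‖
          ≤ ∑ j : Fin M, ‖ε j * ((g j w : ℝ) : ℂ)‖ := norm_sum_le _ _
        _ = ∑ j : Fin M, g j w := by
            refine Finset.sum_congr rfl fun j _ => ?_
            rw [norm_mul, hε, csign_abs, one_mul,
              Complex.norm_real, Real.norm_eq_abs, abs_of_nonneg (hg01 j w).1]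
        _ ≤ 1 := hsumg w
    have hzK : z ∈ K := hZK hz
    have hLf : (L f) ⟨z, hzK⟩ = ((∑ j : Fin M, ‖(φ j).eval z‖ : ℝ) : ℂ) := by
      rw [hL f ⟨z, hzK⟩]
      push_cast
      refine Finset.sum_congr rfl fun j _ => ?_
      rw [hfval j, hε]
      exact csign_mul _
    calc ∑ j : Fin M, ‖(φ j).eval z‖
        = ‖(L f) ⟨z, hzK⟩‖ := by
          rw [hLf, Complex.norm_real, Real.norm_eq_abs,
            abs_of_nonneg (Finset.sum_nonneg fun j _ => norm_nonneg _)]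
      _ ≤ ‖L f‖ := ContinuousMap.norm_coe_le_norm _ _
      _ ≤ ‖L‖ * ‖f‖ := L.le_opNorm f
      _ ≤ ‖L‖ * 1 := mul_le_mul_of_nonneg_left hfnorm (norm_nonneg L)
      _ = ‖L‖ := mul_one _
  · -- upper bound
    have hcS : 0 ≤ c * S := mul_nonneg (le_trans zero_le_one hc) hS0
    refine L.opNorm_le_bound hcS fun f => ?_
    rw [ContinuousMap.norm_le _ (mul_nonneg hcS (norm_nonneg f))]
    intro x
    rw [hL f x]
    calc ‖∑ j : Fin M, f (ξ j) * (φ j).eval (x : ℂ)‖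
        ≤ ∑ j : Fin M, ‖f (ξ j) * (φ j).eval (x : ℂ)‖ := norm_sum_le _ _
      _ ≤ ∑ j : Fin M, ‖f‖ * ‖(φ j).eval (x : ℂ)‖ := by
          refine Finset.sum_le_sum fun j _ => ?_
          rw [norm_mul]
          exact mul_le_mul_of_nonneg_right (f.norm_coe_le_norm _) (norm_nonneg _)
      _ = ‖f‖ * ∑ j : Fin M, ‖(φ j).eval (x : ℂ)‖ := by rw [Finset.mul_sum]
      _ ≤ ‖f‖ * (c * S) := mul_le_mul_of_nonneg_left (hlam x x.2) (norm_nonneg f)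
      _ = c * S * ‖f‖ := by ring
end

section
/- Under the hypotheses of the previous statement (i.e., $Z\subseteq K$ finite with $\sup_{z\in K}|p(z)|\leq c\max_{z\in Z}|p(z)|$ for all complex polynomials $p$ of degree at most $n$, and $L f(z)=\sum_{j=1}^{M}f(\xi_j)\phi_j(z)$ with $\xi_j\in K$ distinct and $\phi_j$ complex polynomials of degree at most $n$, $\lambda(z)=\sum_j|\phi_j(z)|$), the following error bounds hold: $0 \leq \|L\| - \max_{z\in Z}\lambda(z) \leq (c-1)\,\|L\|$ and $0 \leq \|L\| - \max_{z\in Z}\lambda(z) \leq (c-1)\,\max_{z\in Z}\lambda(z)$. -/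
open Polynomial in
/-- Lower bound: the Lebesgue function at any point of `K` is at most `‖L‖`. -/
lemma lebesgue_fun_le_opNorm {K : Set ℂ} [CompactSpace K] {M : ℕ}
    (ξ : Fin M → K) (hξ : Function.Injective ξ) (φ : Fin M → Polynomial ℂ)
    (L : C(K, ℂ) →L[ℂ] C(K, ℂ))
    (hL : ∀ f : C(K, ℂ), ∀ z : K,
      L f z = ∑ j : Fin M, f (ξ j) * (φ j).eval (z : ℂ))
    (z : K) :
    ∑ j : Fin M, ‖(φ j).eval (z : ℂ)‖ ≤ ‖L‖ := by
  -- choose a separation radius δ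
  obtain ⟨δ, hδ0, hδ⟩ : ∃ δ : ℝ, 0 < δ ∧ ∀ j k : Fin M, j ≠ k → 2 * δ ≤ dist (ξ j) (ξ k) := by
    set P : Finset (Fin M × Fin M) := Finset.univ.filter (fun p => p.1 ≠ p.2) with hP
    by_cases hPne : P.Nonempty
    · refine ⟨P.inf' hPne (fun p => dist (ξ p.1) (ξ p.2)) / 2, ?_, ?_⟩
      · have : ∀ p ∈ P, 0 < dist (ξ p.1) (ξ p.2) := by
          intro p hp
          have hne : p.1 ≠ p.2 := (Finset.mem_filter.mp hp).2
          exact dist_pos.mpr (fun h => hne (hξ h))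
        have := (Finset.lt_inf'_iff hPne (f := fun p => dist (ξ p.1) (ξ p.2)) (a := 0)).mpr this
        linarith
      · intro j k hjk
        have hmem : (j, k) ∈ P := by simp [hP, hjk]
        have := Finset.inf'_le (fun p => dist (ξ p.1) (ξ p.2)) hmem
        simpa using by linarith
    · refine ⟨1, one_pos, ?_⟩
      intro j k hjk
      exact absurd ⟨(j, k), by simp [hP, hjk]⟩ hPne
  set v : Fin M → ℂ := fun j => (φ j).eval (z : ℂ) with hv
  -- unimodular (or zero) coefficients
  set u : Fin M → ℂ := fun j => if v j = 0 then 0 else (starRingEnd ℂ) (v j) / ((‖v j‖ : ℝ) : ℂ)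
    with hu
  have hu_le : ∀ j, ‖u j‖ ≤ 1 := by
    intro j
    by_cases h : v j = 0
    · simp [hu, h]
    · have hab : (0:ℝ) < ‖v j‖ := norm_pos_iff.mpr h
      simp only [hu, h, if_false]
      rw [norm_div]
      simp [Complex.norm_conj, Complex.norm_real, abs_of_pos hab, le_of_eq,
        div_self (ne_of_gt hab)]
  have hu_mul : ∀ j, u j * v j = (‖v j‖ : ℂ) := by
    intro j
    by_cases h : v j = 0
    · simp [hu, h]
    · have hab : (‖v j‖ : ℂ) ≠ 0 := by simpa using (norm_ne_zero_iff.mpr h)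
      simp only [hu, h, if_false]
      rw [div_mul_eq_mul_div, Complex.conj_mul', sq]
      field_simp
  -- bump functions
  set b : Fin M → K → ℝ := fun j w => max 0 (1 - dist w (ξ j) / δ) with hb
  have hb_cont : ∀ j, Continuous (b j) := by
    intro j
    exact continuous_const.max (continuous_const.sub
      ((continuous_id.dist continuous_const).div_const δ))
  have hb_self : ∀ j, b j (ξ j) = 1 := by intro j; simp [hb]
  have hb_le_one : ∀ j w, b j w ≤ 1 := by
    intro j w
    have h1 : 1 - dist w (ξ j) / δ ≤ 1 := by
      have h2 : 0 ≤ dist w (ξ j) / δ := div_nonneg dist_nonneg hδ0.le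
      linarith
    exact max_le zero_le_one h1
  have hb_nonneg : ∀ j w, 0 ≤ b j w := fun j w => le_max_left _ _
  have hb_zero : ∀ j w, δ ≤ dist w (ξ j) → b j w = 0 := by
    intro j w hw
    have h1 : 1 - dist w (ξ j) / δ ≤ 0 := by
      have : 1 ≤ dist w (ξ j) / δ := (one_le_div hδ0).mpr hw
      linarith
    exact max_eq_left h1
  have hb_other : ∀ j k, j ≠ k → b j (ξ k) = 0 := by
    intro j k hjk
    apply hb_zero
    have := hδ k j (fun h => hjk (h ▸ rfl))
    linarith
  -- the test function
  have hf_cont : Continuous (fun w : K => ∑ j : Fin M, u j * ((b j w : ℝ) : ℂ)) := by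
    apply continuous_finset_sum
    intro j _
    exact continuous_const.mul (Complex.continuous_ofReal.comp (hb_cont j))
  set f : C(K, ℂ) := ⟨fun w => ∑ j : Fin M, u j * ((b j w : ℝ) : ℂ), hf_cont⟩ with hf
  have hf_at : ∀ k, f (ξ k) = u k := by
    intro k
    simp only [hf, ContinuousMap.coe_mk]
    rw [Finset.sum_eq_single k]
    · simp [hb_self k]
    · intro j _ hjk
      rw [hb_other j k hjk]
      simp
    · simp
  have hsum_b_le : ∀ w, ∑ j : Fin M, b j w ≤ 1 := by
    intro w
    by_cases hw : ∃ j, dist w (ξ j) < δ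
    · obtain ⟨j0, hj0⟩ := hw
      have : ∑ j : Fin M, b j w = b j0 w := by
        apply Finset.sum_eq_single j0
        · intro k _ hk
          apply hb_zero
          by_contra h
          push_neg at h
          have h2 := hδ j0 k (fun h' => hk (h' ▸ rfl))
          have := dist_triangle (ξ j0) w (ξ k)
          rw [dist_comm (ξ j0) w] at this
          linarith
        · simp
      rw [this]; exact hb_le_one j0 w
    · push_neg at hw
      have : ∀ j ∈ Finset.univ, b j w = 0 := fun j _ => hb_zero j w (hw j)
      rw [Finset.sum_congr rfl this]
      simp
  have hf_norm : ‖f‖ ≤ 1 := by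
    apply ContinuousMap.norm_le f zero_le_one |>.mpr
    intro w
    simp only [hf, ContinuousMap.coe_mk]
    calc ‖∑ j : Fin M, u j * ((b j w : ℝ) : ℂ)‖
        ≤ ∑ j : Fin M, ‖u j * ((b j w : ℝ) : ℂ)‖ := by
          exact norm_sum_le _ _
      _ ≤ ∑ j : Fin M, b j w := by
          apply Finset.sum_le_sum
          intro j _
          rw [norm_mul, Complex.norm_of_nonneg (hb_nonneg j w)]
          exact mul_le_of_le_one_left (hb_nonneg j w) (hu_le j)
      _ ≤ 1 := hsum_b_le w
  -- evaluate L f at z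
  have hval : (L f) z = ((∑ j : Fin M, ‖v j‖ : ℝ) : ℂ) := by
    rw [hL f z]
    push_cast
    apply Finset.sum_congr rfl
    intro j _
    rw [hf_at j, hu_mul j]
  have h1 : ∑ j : Fin M, ‖v j‖ ≤ ‖(L f) z‖ := by
    rw [hval, Complex.norm_real, Real.norm_eq_abs]
    exact le_abs_self _
  calc ∑ j : Fin M, ‖(φ j).eval (z : ℂ)‖ = ∑ j : Fin M, ‖v j‖ := rfl
    _ ≤ ‖(L f) z‖ := h1
    _ ≤ ‖L f‖ := (L f).norm_coe_le_norm z
    _ ≤ ‖L‖ * ‖f‖ := L.le_opNorm f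
    _ ≤ ‖L‖ * 1 := by
        have := norm_nonneg L
        nlinarith [hf_norm]
    _ = ‖L‖ := mul_one _

/-- Error bounds for the approximation of the Lebesgue constant of a
sampling-based polynomial projection-type operator by the max of its Lebesgue
function on an admissible mesh `Z` of `K` with norming constant `c`. -/
theorem lebesgue_constant_mesh_error_bounds (K : Set ℂ) [CompactSpace K]
    (n : ℕ) (hn : 1 ≤ n) (Z : Finset ℂ) (hZne : Z.Nonempty) (hZK : ↑Z ⊆ K)
    (c : ℝ) (hc : 1 ≤ c)
    (hnorm : ∀ p : Polynomial ℂ, p.degree ≤ (n : ℕ) →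
      ∀ z ∈ K, ‖p.eval z‖ ≤
        c * Z.sup' hZne (fun w => ‖p.eval w‖))
    (M : ℕ) (ξ : Fin M → K) (hξ : Function.Injective ξ)
    (φ : Fin M → Polynomial ℂ) (hφ : ∀ j, (φ j).degree ≤ (n : ℕ))
    (L : C(K, ℂ) →L[ℂ] C(K, ℂ))
    (hL : ∀ f : C(K, ℂ), ∀ z : K,
      L f z = ∑ j : Fin M, f (ξ j) * (φ j).eval (z : ℂ)) :
    0 ≤ ‖L‖ - Z.sup' hZne (fun z => ∑ j : Fin M, ‖(φ j).eval z‖) ∧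
    ‖L‖ - Z.sup' hZne (fun z => ∑ j : Fin M, ‖(φ j).eval z‖) ≤
      (c - 1) * ‖L‖ ∧
    ‖L‖ - Z.sup' hZne (fun z => ∑ j : Fin M, ‖(φ j).eval z‖) ≤
      (c - 1) * Z.sup' hZne (fun z => ∑ j : Fin M, ‖(φ j).eval z‖) := by
  set S := Z.sup' hZne (fun z => ∑ j : Fin M, ‖(φ j).eval z‖) with hS
  have hS0 : 0 ≤ S := by
    obtain ⟨z0, hz0⟩ := hZne
    refine le_trans ?_ (Finset.le_sup' (fun z => ∑ j : Fin M, ‖(φ j).eval z‖) hz0)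
    positivity
  have hS_le_L : S ≤ ‖L‖ := by
    apply Finset.sup'_le
    intro z hz
    exact lebesgue_fun_le_opNorm ξ hξ φ L hL ⟨z, hZK hz⟩
  have hL_le : ‖L‖ ≤ c * S := by
    apply ContinuousLinearMap.opNorm_le_bound L (mul_nonneg (by linarith) hS0)
    intro f
    rw [mul_assoc]
    apply (ContinuousMap.norm_le _ (by positivity)).mpr
    intro w
    set p : Polynomial ℂ := ∑ j : Fin M, Polynomial.C (f (ξ j)) * φ j with hp
    have heval : ∀ y : ℂ, p.eval y = ∑ j : Fin M, f (ξ j) * (φ j).eval y := by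
      intro y
      simp [hp, Polynomial.eval_finset_sum]
    have hpdeg : p.degree ≤ (n : ℕ) := by
      refine (Polynomial.degree_sum_le _ _).trans (Finset.sup_le fun j _ => ?_)
      calc (Polynomial.C (f (ξ j)) * φ j).degree
          ≤ (Polynomial.C (f (ξ j))).degree + (φ j).degree := Polynomial.degree_mul_le _ _
        _ ≤ 0 + (φ j).degree := by gcongr; exact Polynomial.degree_C_le
        _ = (φ j).degree := zero_add _
        _ ≤ (n : ℕ) := hφ j
    have hw : (L f) w = p.eval (w : ℂ) := by rw [hL f w, heval]
    rw [hw]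
    calc ‖p.eval (w : ℂ)‖
        ≤ c * Z.sup' hZne (fun y => ‖p.eval y‖) := hnorm p hpdeg _ w.2
      _ ≤ c * (S * ‖f‖) := by
          apply mul_le_mul_of_nonneg_left _ (by linarith : (0:ℝ) ≤ c)
          apply Finset.sup'_le
          intro y hy
          calc ‖p.eval y‖
              ≤ ∑ j : Fin M, ‖f (ξ j) * (φ j).eval y‖ := by
                rw [heval y]; exact norm_sum_le _ _
            _ ≤ ∑ j : Fin M, ‖f‖ * ‖(φ j).eval y‖ := by
                apply Finset.sum_le_sum
                intro j _
                rw [norm_mul]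
                apply mul_le_mul_of_nonneg_right _ (norm_nonneg _)
                exact f.norm_coe_le_norm (ξ j)
            _ = ‖f‖ * ∑ j : Fin M, ‖(φ j).eval y‖ := by
                rw [Finset.mul_sum]
            _ ≤ ‖f‖ * S := by
                apply mul_le_mul_of_nonneg_left _ (norm_nonneg f)
                exact Finset.le_sup' (fun z => ∑ j : Fin M, ‖(φ j).eval z‖) hy
            _ = S * ‖f‖ := mul_comm _ _
  refine ⟨by linarith, ?_, by nlinarith⟩
  nlinarith [mul_nonneg (by linarith : (0:ℝ) ≤ c - 1) (sub_nonneg.mpr hS_le_L)]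
end

section
/- Let $K\subset\mathbb{C}$ be a compact set, $n\geq 1$, and let $Z\subseteq K$ be a finite set with at least $n+1$ points and $c\geq 1$ a constant such that $\sup_{z\in K}|p(z)|\leq c\,\max_{z\in Z}|p(z)|$ for every complex polynomial $p$ of degree at most $n$. Let $\xi_1,\dots,\xi_{n+1}\in Z$ be distinct points maximizing $|\det[\xi_i^{j-1}]_{1\leq i,j\leq n+1}|$ over all $(n+1)$-tuples of distinct points of $Z$ (Fekete points extracted from the mesh $Z$). Then the Lebesgue constant of interpolation at $\xi_1,\dots,\xi_{n+1}$ satisfies $\sup_{z\in K}\sum_{j=1}^{n+1}|\ell_j(z)| \leq c\,(n+1)$, where $\ell_j(z)=\prod_{k\neq j}(z-\xi_k)/(\xi_j-\xi_k)$ are the fundamental Lagrange polynomials. -/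
open Finset

lemma erase_eq_Iio_Ioi {n : ℕ} (j : Fin (n+1)) :
    Finset.univ.erase j = Finset.Iio j ∪ Finset.Ioi j := by
  ext a
  simp [lt_or_lt_iff_ne, ne_comm, and_comm]

lemma prod_erase_split {n : ℕ} (j : Fin (n+1)) (f : Fin (n+1) → ℝ) :
    ∏ k ∈ Finset.univ.erase j, f k =
      (∏ i ∈ Finset.Iio j, f i) * ∏ k ∈ Finset.Ioi j, f k := by
  rw [erase_eq_Iio_Ioi, Finset.prod_union]
  exact Finset.disjoint_left.2
    (fun a ha hb => absurd (mem_Iio.1 ha) (not_lt.2 (le_of_lt (mem_Ioi.1 hb))))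

lemma vdm_abs {n : ℕ} (v : Fin (n+1) → ℂ) (j : Fin (n+1)) :
    ‖(Matrix.vandermonde v).det‖ =
      ((∏ i ∈ Finset.Iio j, ‖v j - v i‖) *
       ∏ k ∈ Finset.Ioi j, ‖v k - v j‖) *
      ∏ i ∈ Finset.univ.erase j, ∏ k ∈ (Finset.Ioi i).erase j,
        ‖v k - v i‖ := by
  rw [Matrix.det_vandermonde, norm_prod]
  simp only [norm_prod]
  rw [← Finset.mul_prod_erase Finset.univ _ (Finset.mem_univ j)]
  have h1 : ∀ i ∈ Finset.univ.erase j,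
      (∏ k ∈ Finset.Ioi i, ‖v k - v i‖) =
        (if i < j then ‖v j - v i‖ else 1) *
          ∏ k ∈ (Finset.Ioi i).erase j, ‖v k - v i‖ := by
    intro i _
    by_cases h : i < j
    · rw [if_pos h, Finset.mul_prod_erase (Finset.Ioi i)
        (fun k => ‖v k - v i‖) (Finset.mem_Ioi.2 h)]
    · rw [if_neg h, one_mul,
        Finset.erase_eq_of_notMem (fun hj => h (Finset.mem_Ioi.1 hj))]
  rw [Finset.prod_congr rfl h1, Finset.prod_mul_distrib]
  have h2 : (∏ i ∈ Finset.univ.erase j,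
      (if i < j then ‖v j - v i‖ else 1)) =
      ∏ i ∈ Finset.Iio j, ‖v j - v i‖ := by
    rw [← Finset.prod_filter]
    congr 1
    ext a
    simp only [Finset.mem_filter, Finset.mem_erase, Finset.mem_univ, Finset.mem_Iio, true_and,
      and_iff_right_iff_imp]
    exact fun h => ⟨ne_of_lt h, trivial⟩
  rw [h2]; ring

lemma fekete_lagrange_le_one {n : ℕ} (Z : Finset ℂ) (ξ : Fin (n + 1) → ℂ)
    (hξZ : ∀ i, ξ i ∈ Z) (hξ : Function.Injective ξ)
    (hmax : ∀ η : Fin (n + 1) → ℂ, (∀ i, η i ∈ Z) → Function.Injective η →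
      ‖(Matrix.vandermonde η).det‖ ≤
        ‖(Matrix.vandermonde ξ).det‖)
    (j : Fin (n + 1)) (w : ℂ) (hw : w ∈ Z) :
    ‖∏ k ∈ Finset.univ.erase j, (w - ξ k) / (ξ j - ξ k)‖ ≤ 1 := by
  by_cases hcase : ∃ k, w = ξ k
  · obtain ⟨k, rfl⟩ := hcase
    by_cases hkj : k = j
    · subst hkj
      have : (∏ m ∈ Finset.univ.erase k, (ξ k - ξ m) / (ξ k - ξ m)) = 1 := by
        apply Finset.prod_eq_one
        intro m hm
        exact div_self (sub_ne_zero.2 (fun h => (Finset.mem_erase.1 hm).1 (hξ h.symm)))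
      rw [this]; simp
    · have hk : k ∈ Finset.univ.erase j := Finset.mem_erase.2 ⟨hkj, Finset.mem_univ k⟩
      rw [Finset.prod_eq_zero hk (f := fun m => (ξ k - ξ m) / (ξ j - ξ m)) (by simp)]
      simp
  · push_neg at hcase
    set η := Function.update ξ j w with hη
    have hηZ : ∀ i, η i ∈ Z := by
      intro i
      by_cases h : i = j
      · subst h; simp [hη, hw]
      · simp [hη, Function.update_of_ne h, hξZ i]
    have hηinj : Function.Injective η := by
      intro a b hab
      simp only [hη] at hab
      by_cases ha : a = j <;> by_cases hb : b = j
      · rw [ha, hb]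
      · subst ha
        rw [Function.update_self, Function.update_of_ne hb] at hab
        exact absurd hab (hcase b)
      · subst hb
        rw [Function.update_self, Function.update_of_ne ha] at hab
        exact absurd hab.symm (hcase a)
      · rw [Function.update_of_ne ha, Function.update_of_ne hb] at hab
        exact hξ hab
    have hle := hmax η hηZ hηinj
    rw [vdm_abs η j, vdm_abs ξ j] at hle
    have hB : (∏ i ∈ Finset.univ.erase j, ∏ k ∈ (Finset.Ioi i).erase j,
        ‖η k - η i‖) = ∏ i ∈ Finset.univ.erase j, ∏ k ∈ (Finset.Ioi i).erase j,
        ‖ξ k - ξ i‖ := by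
      refine Finset.prod_congr rfl fun i hi => Finset.prod_congr rfl fun k hk => ?_
      rw [hη, Function.update_of_ne (Finset.mem_erase.1 hk).1,
        Function.update_of_ne (Finset.mem_erase.1 hi).1]
    have hBpos : 0 < ∏ i ∈ Finset.univ.erase j, ∏ k ∈ (Finset.Ioi i).erase j,
        ‖ξ k - ξ i‖ := by
      apply Finset.prod_pos
      intro i _
      apply Finset.prod_pos
      intro k hk
      exact norm_pos_iff.2 (sub_ne_zero.2
        (fun h => absurd (hξ h) (ne_of_gt (Finset.mem_Ioi.1 (Finset.mem_of_mem_erase hk)))))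
    have hIio : (∏ i ∈ Finset.Iio j, ‖η j - η i‖) =
        ∏ i ∈ Finset.Iio j, ‖w - ξ i‖ := by
      refine Finset.prod_congr rfl fun i hi => ?_
      rw [hη, Function.update_self, Function.update_of_ne (ne_of_lt (Finset.mem_Iio.1 hi))]
    have hIoi : (∏ k ∈ Finset.Ioi j, ‖η k - η j‖) =
        ∏ k ∈ Finset.Ioi j, ‖ξ k - w‖ := by
      refine Finset.prod_congr rfl fun k hk => ?_
      rw [hη, Function.update_self, Function.update_of_ne (ne_of_gt (Finset.mem_Ioi.1 hk))]
    rw [hB, hIio, hIoi] at hle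
    have hA : (∏ i ∈ Finset.Iio j, ‖w - ξ i‖) *
        ∏ k ∈ Finset.Ioi j, ‖ξ k - w‖ ≤
        (∏ i ∈ Finset.Iio j, ‖ξ j - ξ i‖) *
        ∏ k ∈ Finset.Ioi j, ‖ξ k - ξ j‖ :=
      le_of_mul_le_mul_right hle hBpos
    rw [norm_prod]
    simp only [norm_div]
    rw [Finset.prod_div_distrib]
    have hden : 0 < ∏ k ∈ Finset.univ.erase j, ‖ξ j - ξ k‖ := by
      apply Finset.prod_pos
      intro k hk
      exact norm_pos_iff.2 (sub_ne_zero.2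
        (fun h => (Finset.mem_erase.1 hk).1 (hξ h.symm)))
    rw [div_le_one hden]
    rw [prod_erase_split j (fun k => ‖w - ξ k‖),
      prod_erase_split j (fun k => ‖ξ j - ξ k‖)]
    have e1 : (∏ k ∈ Finset.Ioi j, ‖w - ξ k‖) =
        ∏ k ∈ Finset.Ioi j, ‖ξ k - w‖ := by
      refine Finset.prod_congr rfl fun k _ => ?_
      exact norm_sub_rev _ _
    have e2 : (∏ k ∈ Finset.Ioi j, ‖ξ j - ξ k‖) =
        ∏ k ∈ Finset.Ioi j, ‖ξ k - ξ j‖ := by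
      refine Finset.prod_congr rfl fun k _ => ?_
      exact norm_sub_rev _ _
    rw [e1, e2]
    exact hA

/-- Approximate Fekete points extracted from an admissible mesh: if
`ξ₁,…,ξ_{n+1}` maximize the modulus of the Vandermonde determinant over all
`(n+1)`-tuples of distinct points of a norming set `Z ⊆ K` with constant `c`,
then the Lebesgue function of interpolation at the `ξⱼ` is bounded by
`c (n+1)` on `K`. -/
theorem mesh_fekete_lebesgue_bound (K : Set ℂ) (hK : IsCompact K) (n : ℕ)
    (hn : 1 ≤ n) (Z : Finset ℂ) (hZK : ↑Z ⊆ K) (hZcard : n + 1 ≤ Z.card)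
    (hZne : Z.Nonempty) (c : ℝ) (hc : 1 ≤ c)
    (hnorm : ∀ p : Polynomial ℂ, p.degree ≤ (n : ℕ) →
      ∀ z ∈ K, ‖p.eval z‖ ≤
        c * Z.sup' hZne (fun w => ‖p.eval w‖))
    (ξ : Fin (n + 1) → ℂ) (hξZ : ∀ i, ξ i ∈ Z) (hξ : Function.Injective ξ)
    (hmax : ∀ η : Fin (n + 1) → ℂ, (∀ i, η i ∈ Z) → Function.Injective η →
      ‖(Matrix.vandermonde η).det‖ ≤
        ‖(Matrix.vandermonde ξ).det‖) :
    ∀ z ∈ K,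
      ∑ j : Fin (n + 1),
        ‖∏ k ∈ Finset.univ.erase j, (z - ξ k) / (ξ j - ξ k)‖ ≤
          c * (n + 1) := by
  intro z hz
  have hterm : ∀ j : Fin (n + 1),
      ‖∏ k ∈ Finset.univ.erase j, (z - ξ k) / (ξ j - ξ k)‖ ≤ c := by
    intro j
    set p : Polynomial ℂ := ∏ k ∈ Finset.univ.erase j,
      Polynomial.C ((ξ j - ξ k)⁻¹) * (Polynomial.X - Polynomial.C (ξ k)) with hp
    have heval : ∀ y : ℂ, p.eval y = ∏ k ∈ Finset.univ.erase j, (y - ξ k) / (ξ j - ξ k) := by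
      intro y
      rw [hp, Polynomial.eval_prod]
      refine Finset.prod_congr rfl fun k _ => ?_
      simp [div_eq_mul_inv, mul_comm]
    have hdeg : p.degree ≤ (n : ℕ) := by
      refine le_trans (Polynomial.degree_prod_le _ _) ?_
      have h1 : ∀ k ∈ Finset.univ.erase j,
          (Polynomial.C ((ξ j - ξ k)⁻¹) * (Polynomial.X - Polynomial.C (ξ k))).degree ≤ 1 := by
        intro k _
        refine le_trans (Polynomial.degree_mul_le _ _) ?_
        rw [Polynomial.degree_X_sub_C]
        calc (Polynomial.C ((ξ j - ξ k)⁻¹)).degree + 1 ≤ 0 + 1 :=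
              add_le_add_left Polynomial.degree_C_le 1
          _ = 1 := by norm_num
      refine le_trans (Finset.sum_le_sum h1) ?_
      rw [Finset.sum_const, Finset.card_erase_of_mem (Finset.mem_univ j)]
      simp [nsmul_eq_mul]
    have hsup : Z.sup' hZne (fun w => ‖p.eval w‖) ≤ 1 := by
      refine Finset.sup'_le _ _ fun w hw => ?_
      rw [heval]
      exact fekete_lagrange_le_one Z ξ hξZ hξ hmax j w hw
    calc ‖∏ k ∈ Finset.univ.erase j, (z - ξ k) / (ξ j - ξ k)‖
        = ‖p.eval z‖ := by rw [heval]
      _ ≤ c * Z.sup' hZne (fun w => ‖p.eval w‖) := hnorm p hdeg z hz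
      _ ≤ c * 1 := by
          exact mul_le_mul_of_nonneg_left hsup (le_trans zero_le_one hc)
      _ = c := mul_one c
  calc (∑ j : Fin (n + 1),
        ‖∏ k ∈ Finset.univ.erase j, (z - ξ k) / (ξ j - ξ k)‖)
      ≤ ∑ _j : Fin (n + 1), c := Finset.sum_le_sum fun j _ => hterm j
    _ = c * (n + 1) := by
        rw [Finset.sum_const, Finset.card_univ, Fintype.card_fin, nsmul_eq_mul]
        push_cast; ring
end
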